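/- Let θ ∈ (0, 1/2], let n ≥ 2 be an integer, and let u ∈ S_{T[θ,S_n]}. Then min( ‖u + y‖ , ‖u − y‖ ) ≤ 1 for all y ∈ S_{T[θ,S_n]} if and only if u = e₁ or u = −e₁. -/

import Mathlib

open scoped BigOperators

noncomputable section

/-- Projection of a finitely supported vector onto the coordinates in `E`. -/
def tsProj (E : Finset ℕ+) (x : ℕ+ →₀ ℝ) : ℕ+ →₀ ℝ :=
  x.filter fun i => i ∈ E

/-- The Schreier families `S_n` on the positive integers:
`S₁` consists of the sets `F` with `|F| ≤ min F` (together with `∅`), and `S_{n+1}`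
consists of unions `F₁ ∪ ⋯ ∪ F_d` of nonempty members `F₁ < ⋯ < F_d` of `S_n`
with `d ≤ min F₁` (together with `∅`). -/
def Schreier : ℕ → Set (Finset ℕ+)
  | 0 => {F | F.card ≤ 1}
  | 1 => {F | ∀ a ∈ F, F.card ≤ (a : ℕ)}
  | n + 2 =>
      {F | F = ∅ ∨
        ∃ (d : ℕ) (G : Fin d → Finset ℕ+),
          0 < d ∧ (∀ i, G i ∈ Schreier (n + 1)) ∧ (∀ i, (G i).Nonempty) ∧
          (∀ i j : Fin d, i < j → ∀ a ∈ G i, ∀ b ∈ G j, a < b) ∧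
          (∀ i, ∀ a ∈ G i, d ≤ (a : ℕ)) ∧ F = Finset.univ.biUnion G}

/-- A tuple of nonempty finite sets `E 0 < E 1 < ⋯` whose set of minima belongs to `S`. -/
def TsAdmissible (S : Set (Finset ℕ+)) {d : ℕ} (E : Fin d → Finset ℕ+) : Prop :=
  (∀ i, (E i).Nonempty) ∧
  (∀ i j : Fin d, i < j → ∀ a ∈ E i, ∀ b ∈ E j, a < b) ∧
  ∃ μ : Fin d → ℕ+, (∀ i, IsLeast (↑(E i) : Set ℕ+) (μ i)) ∧
    Finset.univ.image μ ∈ S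

/-- The iterated norms `‖·‖_m` in the construction of the Tsirelson norm:
`‖x‖₀` is the supremum norm and
`‖x‖_{m+1} = max(‖x‖_m, sup{θ ∑ᵢ ‖Eᵢ x‖_m : E₁ < ⋯ < E_d, {min Eᵢ} ∈ S})`. -/
def tnormAux (θ : ℝ) (S : Set (Finset ℕ+)) : ℕ → (ℕ+ →₀ ℝ) → ℝ
  | 0, x => ⨆ i, |x i|
  | m + 1, x =>
      max (tnormAux θ S m x)
        (sSup {r : ℝ | ∃ (d : ℕ) (E : Fin d → Finset ℕ+), TsAdmissible S E ∧
          r = θ * ∑ i, tnormAux θ S m (tsProj (E i) x)})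

/-- The Tsirelson norm `‖x‖_{θ,S} = sup_m ‖x‖_m` on `c₀₀`. -/
def tnorm (θ : ℝ) (S : Set (Finset ℕ+)) (x : ℕ+ →₀ ℝ) : ℝ :=
  ⨆ m : ℕ, tnormAux θ S m x

-- ## auxiliary ℓ¹ norm
def l1 (x : ℕ+ →₀ ℝ) : ℝ := x.support.sum fun i => |x i|

lemma l1_nonneg (x : ℕ+ →₀ ℝ) : 0 ≤ l1 x :=
  Finset.sum_nonneg fun _ _ => abs_nonneg _

lemma abs_le_l1 (x : ℕ+ →₀ ℝ) (i : ℕ+) : |x i| ≤ l1 x := by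
  by_cases h : i ∈ x.support
  · exact Finset.single_le_sum (fun j _ => abs_nonneg (x j)) h
  · simp [Finsupp.notMem_support_iff.mp h, l1_nonneg]

lemma tsProj_apply (E : Finset ℕ+) (x : ℕ+ →₀ ℝ) (a : ℕ+) :
    tsProj E x a = if a ∈ E then x a else 0 := by
  rw [tsProj, Finsupp.filter_apply]

lemma l1_tsProj (E : Finset ℕ+) (x : ℕ+ →₀ ℝ) :
    l1 (tsProj E x) = (x.support.filter fun a => a ∈ E).sum fun a => |x a| := by
  rw [l1, tsProj, Finsupp.support_filter]
  refine Finset.sum_congr rfl fun a ha => ?_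
  rw [Finset.mem_filter] at ha
  rw [Finsupp.filter_apply, if_pos ha.2]

lemma sum_l1_tsProj_le {d : ℕ} (E : Fin d → Finset ℕ+)
    (hinc : ∀ i j : Fin d, i < j → ∀ a ∈ E i, ∀ b ∈ E j, a < b) (x : ℕ+ →₀ ℝ) :
    ∑ i, l1 (tsProj (E i) x) ≤ l1 x := by
  have hdisj : (↑(Finset.univ : Finset (Fin d)) : Set (Fin d)).PairwiseDisjoint
      fun i => x.support.filter fun a => a ∈ E i := by
    intro i _ j _ hij
    rcases lt_or_gt_of_ne hij with h | h
    · refine Finset.disjoint_left.mpr fun a hai haj => ?_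
      rw [Finset.mem_filter] at hai haj
      exact lt_irrefl a (hinc i j h a hai.2 a haj.2)
    · refine Finset.disjoint_left.mpr fun a hai haj => ?_
      rw [Finset.mem_filter] at hai haj
      exact lt_irrefl a (hinc j i h a haj.2 a hai.2)
  calc ∑ i, l1 (tsProj (E i) x)
      = ∑ a ∈ (Finset.univ.biUnion fun i => x.support.filter fun a => a ∈ E i), |x a| := by
        rw [Finset.sum_biUnion hdisj]
        exact Finset.sum_congr rfl fun i _ => l1_tsProj (E i) x
    _ ≤ l1 x := by
        refine Finset.sum_le_sum_of_subset_of_nonneg ?_ fun a _ _ => abs_nonneg _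
        intro a ha
        rcases Finset.mem_biUnion.mp ha with ⟨i, _, hai⟩
        exact (Finset.mem_filter.mp hai).1

lemma bddAbove_abs (x : ℕ+ →₀ ℝ) : BddAbove (Set.range fun i => |x i|) :=
  ⟨l1 x, by rintro r ⟨i, rfl⟩; exact abs_le_l1 x i⟩

lemma abs_le_tnormAux_zero (θ : ℝ) (S : Set (Finset ℕ+)) (x : ℕ+ →₀ ℝ) (i : ℕ+) :
    |x i| ≤ tnormAux θ S 0 x :=
  le_ciSup (bddAbove_abs x) i

lemma tnormAux_zero_le (θ : ℝ) (S : Set (Finset ℕ+)) (x : ℕ+ →₀ ℝ) {c : ℝ}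
    (h : ∀ i, |x i| ≤ c) : tnormAux θ S 0 x ≤ c :=
  ciSup_le h

section
variable {θ : ℝ} {S : Set (Finset ℕ+)}

lemma tnormAux_nonneg (hθ : 0 ≤ θ) (m : ℕ) (x : ℕ+ →₀ ℝ) : 0 ≤ tnormAux θ S m x := by
  induction m with
  | zero => exact le_trans (abs_nonneg _) (abs_le_tnormAux_zero θ S x 1)
  | succ m ih => exact le_max_of_le_left ih

lemma tnormAux_le_l1 (hθ0 : 0 ≤ θ) (hθ1 : θ ≤ 1) (m : ℕ) (x : ℕ+ →₀ ℝ) :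
    tnormAux θ S m x ≤ l1 x := by
  induction m generalizing x with
  | zero => exact tnormAux_zero_le θ S x (abs_le_l1 x)
  | succ m ih =>
    refine max_le (ih x) (Real.sSup_le ?_ (l1_nonneg x))
    rintro r ⟨d, E, hadm, rfl⟩
    calc θ * ∑ i, tnormAux θ S m (tsProj (E i) x)
        ≤ 1 * ∑ i, l1 (tsProj (E i) x) := by
          refine mul_le_mul hθ1 (Finset.sum_le_sum fun i _ => ih _) ?_ zero_le_one
          exact Finset.sum_nonneg fun i _ => tnormAux_nonneg hθ0 m _
      _ = ∑ i, l1 (tsProj (E i) x) := one_mul _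
      _ ≤ l1 x := sum_l1_tsProj_le E hadm.2.1 x

lemma bddAbove_normSet (hθ0 : 0 ≤ θ) (hθ1 : θ ≤ 1) (m : ℕ) (x : ℕ+ →₀ ℝ) :
    BddAbove {r : ℝ | ∃ (d : ℕ) (E : Fin d → Finset ℕ+), TsAdmissible S E ∧
      r = θ * ∑ i, tnormAux θ S m (tsProj (E i) x)} := by
  refine ⟨l1 x, ?_⟩
  rintro r ⟨d, E, hadm, rfl⟩
  calc θ * ∑ i, tnormAux θ S m (tsProj (E i) x)
      ≤ 1 * ∑ i, l1 (tsProj (E i) x) := by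
        refine mul_le_mul hθ1 (Finset.sum_le_sum fun i _ => tnormAux_le_l1 hθ0 hθ1 m _) ?_ zero_le_one
        exact Finset.sum_nonneg fun i _ => tnormAux_nonneg hθ0 m _
    _ = ∑ i, l1 (tsProj (E i) x) := one_mul _
    _ ≤ l1 x := sum_l1_tsProj_le E hadm.2.1 x

lemma tnormAux_succ (m : ℕ) (x : ℕ+ →₀ ℝ) :
    tnormAux θ S (m + 1) x =
      max (tnormAux θ S m x)
        (sSup {r : ℝ | ∃ (d : ℕ) (E : Fin d → Finset ℕ+), TsAdmissible S E ∧
          r = θ * ∑ i, tnormAux θ S m (tsProj (E i) x)}) := rfl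

lemma le_tnormAux_succ (hθ0 : 0 ≤ θ) (hθ1 : θ ≤ 1) {d : ℕ} {E : Fin d → Finset ℕ+}
    (hadm : TsAdmissible S E) (m : ℕ) (x : ℕ+ →₀ ℝ) :
    θ * ∑ i, tnormAux θ S m (tsProj (E i) x) ≤ tnormAux θ S (m + 1) x :=
  le_max_of_le_right (le_csSup (bddAbove_normSet hθ0 hθ1 m x) ⟨d, E, hadm, rfl⟩)

lemma tnormAux_mono (x : ℕ+ →₀ ℝ) : Monotone fun m => tnormAux θ S m x :=
  monotone_nat_of_le_succ fun m => le_max_left _ _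

lemma bddAbove_tnormAux (hθ0 : 0 ≤ θ) (hθ1 : θ ≤ 1) (x : ℕ+ →₀ ℝ) :
    BddAbove (Set.range fun m => tnormAux θ S m x) :=
  ⟨l1 x, by rintro r ⟨m, rfl⟩; exact tnormAux_le_l1 hθ0 hθ1 m x⟩

lemma tnormAux_le_tnorm (hθ0 : 0 ≤ θ) (hθ1 : θ ≤ 1) (m : ℕ) (x : ℕ+ →₀ ℝ) :
    tnormAux θ S m x ≤ tnorm θ S x :=
  le_ciSup (bddAbove_tnormAux hθ0 hθ1 x) m

lemma tnorm_le (x : ℕ+ →₀ ℝ) {c : ℝ} (h : ∀ m, tnormAux θ S m x ≤ c) :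
    tnorm θ S x ≤ c := ciSup_le h

lemma tnorm_nonneg (hθ0 : 0 ≤ θ) (hθ1 : θ ≤ 1) (x : ℕ+ →₀ ℝ) : 0 ≤ tnorm θ S x :=
  le_trans (tnormAux_nonneg hθ0 0 x) (tnormAux_le_tnorm hθ0 hθ1 0 x)

lemma abs_le_tnorm (hθ0 : 0 ≤ θ) (hθ1 : θ ≤ 1) (x : ℕ+ →₀ ℝ) (i : ℕ+) :
    |x i| ≤ tnorm θ S x :=
  le_trans (abs_le_tnormAux_zero θ S x i) (tnormAux_le_tnorm hθ0 hθ1 0 x)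

lemma tnorm_zero (hθ0 : 0 ≤ θ) (hθ1 : θ ≤ 1) : tnorm θ S 0 = 0 := by
  refine le_antisymm (tnorm_le 0 fun m => ?_) (tnorm_nonneg hθ0 hθ1 0)
  have := tnormAux_le_l1 (S := S) hθ0 hθ1 m 0
  simpa [l1] using this

lemma tnormAux_le_max_sup_l1 (hθ0 : 0 ≤ θ) (hθ1 : θ ≤ 1) (m : ℕ) (x : ℕ+ →₀ ℝ) :
    tnormAux θ S m x ≤ max (tnormAux θ S 0 x) (θ * l1 x) := by
  induction m with
  | zero => exact le_max_left _ _
  | succ m ih =>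
    refine max_le ih (le_max_of_le_right ?_)
    refine Real.sSup_le ?_ (mul_nonneg hθ0 (l1_nonneg x))
    rintro r ⟨d, E, hadm, rfl⟩
    refine mul_le_mul_of_nonneg_left ?_ hθ0
    exact le_trans (Finset.sum_le_sum fun i _ => tnormAux_le_l1 hθ0 hθ1 m _)
      (sum_l1_tsProj_le E hadm.2.1 x)

end

-- ## Schreier family lemmas
lemma schreier_empty (n : ℕ) : (∅ : Finset ℕ+) ∈ Schreier n := by
  match n with
  | 0 => simp [Schreier]
  | 1 => simp [Schreier]
  | n + 2 => exact Or.inl rfl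

lemma schreier_one_step (m : ℕ) (F : Finset ℕ+) (hF : F ∈ Schreier (m + 1))
    (hne : F.Nonempty) : F ∈ Schreier (m + 2) := by
  refine Or.inr ⟨1, fun _ => F, one_pos, fun _ => hF, fun _ => hne, ?_, ?_, ?_⟩
  · intro i j hij; exact absurd hij (by omega)
  · intro i b hb; exact b.one_le
  · simp

lemma schreier_singleton (n : ℕ) (a : ℕ+) : ({a} : Finset ℕ+) ∈ Schreier n := by
  induction n with
  | zero => simp [Schreier]
  | succ n ih =>
    match n, ih with
    | 0, _ =>
      intro b hb
      rw [Finset.mem_singleton] at hb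
      subst hb; have hb1 : 1 ≤ (b : ℕ) := b.property; simpa using hb1
    | n + 1, ih => exact schreier_one_step n {a} ih (Finset.singleton_nonempty a)

lemma schreier_of_one (F : Finset ℕ+) (hF : F ∈ Schreier 1) (hne : F.Nonempty) :
    ∀ m : ℕ, F ∈ Schreier (m + 1) := by
  intro m
  induction m with
  | zero => exact hF
  | succ m ih => exact schreier_one_step m F ih hne

lemma schreier_insert (m : ℕ) (a : ℕ+) (ha : 2 ≤ (a : ℕ)) (F : Finset ℕ+)
    (hF : F ∈ Schreier (m + 1)) (hne : F.Nonempty) (hlt : ∀ b ∈ F, a < b) :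
    insert a F ∈ Schreier (m + 2) := by
  refine Or.inr ⟨2, fun i => if (i : ℕ) = 0 then {a} else F, two_pos,
    fun i => ?_, fun i => ?_, ?_, ?_, ?_⟩
  · by_cases hi : (i : ℕ) = 0
    · show (if (i : ℕ) = 0 then ({a} : Finset ℕ+) else F) ∈ _
      rw [if_pos hi]; exact schreier_singleton (m + 1) a
    · show (if (i : ℕ) = 0 then ({a} : Finset ℕ+) else F) ∈ _
      rw [if_neg hi]; exact hF
  · by_cases hi : (i : ℕ) = 0
    · show (if (i : ℕ) = 0 then ({a} : Finset ℕ+) else F).Nonempty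
      rw [if_pos hi]; exact Finset.singleton_nonempty a
    · show (if (i : ℕ) = 0 then ({a} : Finset ℕ+) else F).Nonempty
      rw [if_neg hi]; exact hne
  · intro i j hij x hx y hy
    replace hx : x ∈ if (i : ℕ) = 0 then ({a} : Finset ℕ+) else F := hx
    replace hy : y ∈ if (j : ℕ) = 0 then ({a} : Finset ℕ+) else F := hy
    have hi : (i : ℕ) = 0 := by omega
    have hj : (j : ℕ) ≠ 0 := by omega
    rw [if_pos hi, Finset.mem_singleton] at hx
    rw [if_neg hj] at hy
    exact hx ▸ hlt y hy
  · intro i b hb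
    replace hb : b ∈ if (i : ℕ) = 0 then ({a} : Finset ℕ+) else F := hb
    by_cases hi : (i : ℕ) = 0
    · rw [if_pos hi, Finset.mem_singleton] at hb
      exact hb ▸ ha
    · rw [if_neg hi] at hb
      have h2 : (a : ℕ) < (b : ℕ) := by exact_mod_cast hlt b hb
      omega
  · ext b
    simp only [Finset.mem_biUnion, Finset.mem_univ, true_and, Finset.mem_insert]
    constructor
    · rintro (rfl | h)
      · exact ⟨0, by simp⟩
      · refine ⟨1, ?_⟩
        show b ∈ if ((1 : Fin 2) : ℕ) = 0 then ({a} : Finset ℕ+) else F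
        simpa using h
    · rintro ⟨i, hi⟩
      replace hi : b ∈ if (i : ℕ) = 0 then ({a} : Finset ℕ+) else F := hi
      by_cases h : (i : ℕ) = 0
      · rw [if_pos h, Finset.mem_singleton] at hi; exact Or.inl hi
      · rw [if_neg h] at hi; exact Or.inr hi

lemma schreier_one_mem (n : ℕ) (G : Finset ℕ+) (hG : G ∈ Schreier (n + 1))
    (h1 : (1 : ℕ+) ∈ G) : G = {1} := by
  induction n generalizing G with
  | zero =>
    have hcard : G.card ≤ 1 := by simpa using hG 1 h1
    exact Finset.eq_singleton_iff_unique_mem.mpr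
      ⟨h1, fun b hb => Finset.card_le_one.mp hcard b hb 1 h1⟩
  | succ n ih =>
    rcases hG with h | ⟨d, Gi, hd, hmem, _, _, hge, rfl⟩
    · exact absurd (h ▸ h1) (by simp)
    · rcases Finset.mem_biUnion.mp h1 with ⟨i0, _, hi0⟩
      have hd1 : d = 1 := le_antisymm (by simpa using hge i0 1 hi0) hd
      subst hd1
      have hG0 : Finset.univ.biUnion Gi = Gi 0 := by
        rw [show (Finset.univ : Finset (Fin 1)) = {0} from rfl, Finset.singleton_biUnion]
      rw [hG0] at h1 ⊢
      exact ih (Gi 0) (hmem 0) h1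

-- ## projections, erase, neg
section
variable {θ : ℝ} {S : Set (Finset ℕ+)}

lemma tsProj_neg (E : Finset ℕ+) (x : ℕ+ →₀ ℝ) : tsProj E (-x) = -tsProj E x := by
  ext a; simp [tsProj_apply, Finsupp.neg_apply]
  split <;> simp

lemma tsProj_erase (E : Finset ℕ+) (x : ℕ+ →₀ ℝ) :
    tsProj E (x.erase 1) = (tsProj E x).erase 1 := by
  ext a
  rw [Finsupp.erase_apply]
  by_cases h1 : a = 1
  · subst h1; simp [tsProj_apply, Finsupp.erase_apply]
  · rw [if_neg h1, tsProj_apply, tsProj_apply, Finsupp.erase_apply, if_neg h1]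

lemma tsProj_erase_of_not_mem (E : Finset ℕ+) (h : (1 : ℕ+) ∉ E) (x : ℕ+ →₀ ℝ) :
    tsProj E (x.erase 1) = tsProj E x := by
  ext a
  rw [tsProj_apply, tsProj_apply]
  by_cases ha : a ∈ E
  · rw [if_pos ha, if_pos ha, Finsupp.erase_apply, if_neg (by rintro rfl; exact h ha)]
  · rw [if_neg ha, if_neg ha]

lemma tsProj_erase_set (E : Finset ℕ+) (x : ℕ+ →₀ ℝ) :
    tsProj E (x.erase 1) = tsProj (E.erase 1) x := by
  ext a
  by_cases h1 : a = 1 <;> by_cases ha : a ∈ E <;>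
    simp [tsProj_apply, Finsupp.erase_apply, Finset.mem_erase, h1, ha]

lemma tsProj_empty (x : ℕ+ →₀ ℝ) : tsProj ∅ x = 0 := by
  ext a; simp [tsProj_apply]

lemma tnormAux_zero_fun (hθ0 : 0 ≤ θ) (hθ1 : θ ≤ 1) (m : ℕ) :
    tnormAux θ S m (0 : ℕ+ →₀ ℝ) = 0 := by
  refine le_antisymm ?_ (tnormAux_nonneg hθ0 m 0)
  have := tnormAux_le_l1 (S := S) hθ0 hθ1 m 0
  simpa [l1] using this

lemma adm_one {d : ℕ} {E : Fin d → Finset ℕ+} (hadm : TsAdmissible S E)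
    (hS1 : ∀ G ∈ S, (1 : ℕ+) ∈ G → G = {1}) (i₀ : Fin d) (h1 : (1 : ℕ+) ∈ E i₀) :
    d = 1 := by
  obtain ⟨hne, hinc, μ, hμ, hμS⟩ := hadm
  have hμ1 : μ i₀ = 1 := le_antisymm ((hμ i₀).2 h1) (μ i₀).one_le
  have himg : Finset.univ.image μ = {1} :=
    hS1 _ hμS (Finset.mem_image.mpr ⟨i₀, Finset.mem_univ _, hμ1⟩)
  have hd1 : 1 ≤ d := i₀.pos
  by_contra hne'
  have hd2 : 2 ≤ d := by omega
  have hij : (⟨0, by omega⟩ : Fin d) < ⟨1, by omega⟩ := by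
    rw [Fin.lt_def]; exact Nat.zero_lt_one
  have h0 : μ ⟨0, by omega⟩ = 1 := by
    have := Finset.mem_image_of_mem μ (Finset.mem_univ (⟨0, by omega⟩ : Fin d))
    rw [himg, Finset.mem_singleton] at this
    exact this
  have h1' : μ ⟨1, by omega⟩ = 1 := by
    have := Finset.mem_image_of_mem μ (Finset.mem_univ (⟨1, by omega⟩ : Fin d))
    rw [himg, Finset.mem_singleton] at this
    exact this
  have := hinc _ _ hij 1 (h0 ▸ (hμ _).1) 1 (h1' ▸ (hμ _).1)
  exact lt_irrefl _ this

lemma adm_single (E : Finset ℕ+) (hne : E.Nonempty) (hSsing : ∀ a : ℕ+, {a} ∈ S) :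
    TsAdmissible S (fun _ : Fin 1 => E) := by
  refine ⟨fun _ => hne, ?_, fun _ => E.min' hne, fun i => ⟨E.min'_mem hne, fun b hb => E.min'_le b hb⟩, ?_⟩
  · intro i j hij; exact absurd hij (by omega)
  · have : Finset.univ.image (fun _ : Fin 1 => E.min' hne) = {E.min' hne} := by
      rw [show (Finset.univ : Finset (Fin 1)) = {0} from rfl, Finset.image_singleton]
    rw [this]; exact hSsing _

lemma tnormAux_le_erase (hθ0 : 0 ≤ θ) (hθ1 : θ ≤ 1)
    (hS1 : ∀ G ∈ S, (1 : ℕ+) ∈ G → G = {1}) (m : ℕ) (x : ℕ+ →₀ ℝ) :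
    tnormAux θ S m x ≤ max |x 1| (tnormAux θ S m (x.erase 1)) := by
  induction m generalizing x with
  | zero =>
    refine tnormAux_zero_le θ S x fun i => ?_
    by_cases h1 : i = 1
    · subst h1; exact le_max_left _ _
    · refine le_max_of_le_right ?_
      have : |x i| = |(x.erase 1) i| := by rw [Finsupp.erase_apply, if_neg h1]
      rw [this]; exact abs_le_tnormAux_zero θ S _ i
  | succ m ih =>
    refine max_le ((ih x).trans (max_le_max le_rfl (tnormAux_mono _ (Nat.le_succ m)))) ?_
    refine Real.sSup_le ?_ (le_max_of_le_left (abs_nonneg _))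
    rintro r ⟨d, E, hadm, rfl⟩
    by_cases hc : ∃ i, (1 : ℕ+) ∈ E i
    · obtain ⟨i₀, h1⟩ := hc
      have hd : d = 1 := adm_one hadm hS1 i₀ h1
      subst hd
      rw [Fin.sum_univ_one]
      have hIH := ih (tsProj (E 0) x)
      have hA : |(tsProj (E 0) x) 1| ≤ |x 1| := by
        rw [tsProj_apply]; split
        · exact le_rfl
        · simp
      calc θ * tnormAux θ S m (tsProj (E 0) x)
          ≤ θ * max |(tsProj (E 0) x) 1| (tnormAux θ S m ((tsProj (E 0) x).erase 1)) :=
            mul_le_mul_of_nonneg_left hIH hθ0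
        _ = max (θ * |(tsProj (E 0) x) 1|) (θ * tnormAux θ S m ((tsProj (E 0) x).erase 1)) :=
            mul_max_of_nonneg _ _ hθ0
        _ ≤ max |x 1| (tnormAux θ S (m + 1) (x.erase 1)) := by
            refine max_le_max ?_ ?_
            · calc θ * |(tsProj (E 0) x) 1| ≤ 1 * |x 1| :=
                mul_le_mul hθ1 hA (abs_nonneg _) zero_le_one
              _ = |x 1| := one_mul _
            · rw [← tsProj_erase]
              have := le_tnormAux_succ hθ0 hθ1 hadm m (x.erase 1)
              rwa [Fin.sum_univ_one] at this
    · push_neg at hc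
      have heq : ∀ i, tsProj (E i) x = tsProj (E i) (x.erase 1) :=
        fun i => (tsProj_erase_of_not_mem (E i) (hc i) x).symm
      refine le_max_of_le_right ?_
      calc θ * ∑ i, tnormAux θ S m (tsProj (E i) x)
          = θ * ∑ i, tnormAux θ S m (tsProj (E i) (x.erase 1)) := by
            congr 1; exact Finset.sum_congr rfl fun i _ => by rw [heq i]
        _ ≤ tnormAux θ S (m + 1) (x.erase 1) := le_tnormAux_succ hθ0 hθ1 hadm m _

lemma tnormAux_erase_le (hθ0 : 0 ≤ θ) (hθ1 : θ ≤ 1)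
    (hS1 : ∀ G ∈ S, (1 : ℕ+) ∈ G → G = {1}) (hSsing : ∀ a : ℕ+, {a} ∈ S)
    (m : ℕ) (x : ℕ+ →₀ ℝ) :
    tnormAux θ S m (x.erase 1) ≤ tnormAux θ S m x := by
  induction m with
  | zero =>
    refine tnormAux_zero_le θ S _ fun i => ?_
    rw [Finsupp.erase_apply]
    split
    · rw [abs_zero]; exact le_trans (abs_nonneg _) (abs_le_tnormAux_zero θ S x 1)
    · exact abs_le_tnormAux_zero θ S x i
  | succ m ih =>
    refine max_le (ih.trans (tnormAux_mono _ (Nat.le_succ m))) ?_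
    refine Real.sSup_le ?_ (tnormAux_nonneg hθ0 _ x)
    rintro r ⟨d, E, hadm, rfl⟩
    by_cases hc : ∃ i, (1 : ℕ+) ∈ E i
    · obtain ⟨i₀, h1⟩ := hc
      have hd : d = 1 := adm_one hadm hS1 i₀ h1
      subst hd
      rw [Fin.sum_univ_one, tsProj_erase_set]
      by_cases hE : ((E 0).erase 1).Nonempty
      · have hadm' : TsAdmissible S (fun _ : Fin 1 => (E 0).erase 1) := adm_single _ hE hSsing
        have := le_tnormAux_succ hθ0 hθ1 hadm' m x
        rwa [Fin.sum_univ_one] at this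
      · rw [Finset.not_nonempty_iff_eq_empty] at hE
        rw [hE, tsProj_empty, tnormAux_zero_fun hθ0 hθ1, mul_zero]
        exact tnormAux_nonneg hθ0 _ x
    · push_neg at hc
      have heq : ∀ i, tsProj (E i) (x.erase 1) = tsProj (E i) x :=
        fun i => tsProj_erase_of_not_mem (E i) (hc i) x
      calc θ * ∑ i, tnormAux θ S m (tsProj (E i) (x.erase 1))
          = θ * ∑ i, tnormAux θ S m (tsProj (E i) x) := by
            congr 1; exact Finset.sum_congr rfl fun i _ => by rw [heq i]
        _ ≤ tnormAux θ S (m + 1) x := le_tnormAux_succ hθ0 hθ1 hadm m _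

lemma tnorm_le_erase (hθ0 : 0 ≤ θ) (hθ1 : θ ≤ 1)
    (hS1 : ∀ G ∈ S, (1 : ℕ+) ∈ G → G = {1}) (x : ℕ+ →₀ ℝ) :
    tnorm θ S x ≤ max |x 1| (tnorm θ S (x.erase 1)) :=
  tnorm_le x fun m => (tnormAux_le_erase hθ0 hθ1 hS1 m x).trans
    (max_le_max le_rfl (tnormAux_le_tnorm hθ0 hθ1 m _))

lemma tnorm_erase_le (hθ0 : 0 ≤ θ) (hθ1 : θ ≤ 1)
    (hS1 : ∀ G ∈ S, (1 : ℕ+) ∈ G → G = {1}) (hSsing : ∀ a : ℕ+, {a} ∈ S)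
    (x : ℕ+ →₀ ℝ) :
    tnorm θ S (x.erase 1) ≤ tnorm θ S x :=
  tnorm_le _ fun m => (tnormAux_erase_le hθ0 hθ1 hS1 hSsing m x).trans
    (tnormAux_le_tnorm hθ0 hθ1 m _)

lemma tnormAux_neg (m : ℕ) (x : ℕ+ →₀ ℝ) :
    tnormAux θ S m (-x) = tnormAux θ S m x := by
  induction m generalizing x with
  | zero => simp [tnormAux, Finsupp.neg_apply]
  | succ m ih =>
    have hset : {r : ℝ | ∃ (d : ℕ) (E : Fin d → Finset ℕ+), TsAdmissible S E ∧
          r = θ * ∑ i, tnormAux θ S m (tsProj (E i) (-x))} =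
        {r : ℝ | ∃ (d : ℕ) (E : Fin d → Finset ℕ+), TsAdmissible S E ∧
          r = θ * ∑ i, tnormAux θ S m (tsProj (E i) x)} := by
      ext r
      constructor
      · rintro ⟨d, E, h, rfl⟩
        refine ⟨d, E, h, ?_⟩
        congr 1
        refine Finset.sum_congr rfl fun i _ => ?_
        rw [tsProj_neg, ih]
      · rintro ⟨d, E, h, rfl⟩
        refine ⟨d, E, h, ?_⟩
        congr 1
        refine Finset.sum_congr rfl fun i _ => ?_
        rw [tsProj_neg, ih]
    rw [tnormAux_succ, tnormAux_succ, ih x, hset]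

lemma tnorm_neg (x : ℕ+ →₀ ℝ) : tnorm θ S (-x) = tnorm θ S x := by
  unfold tnorm
  exact iSup_congr fun m => tnormAux_neg m x

end

-- ## the far-out perturbation construction
section
variable {θ : ℝ} {S : Set (Finset ℕ+)}

lemma tsirelson_construction (hθ0 : 0 < θ) (hθ1 : θ ≤ 1)
    (hSone : ∀ F : Finset ℕ+, F ∈ Schreier 1 → F.Nonempty → F ∈ S)
    (hSins : ∀ (a : ℕ+) (F : Finset ℕ+), 2 ≤ (a : ℕ) → F ∈ Schreier 1 → F.Nonempty →
      (∀ b ∈ F, a < b) → insert a F ∈ S)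
    (v : ℕ+ →₀ ℝ) (hw : (v.erase 1).support.Nonempty) :
    ∃ y₀ : ℕ+ →₀ ℝ, tnorm θ S y₀ = 1 ∧
      1 + θ * tnorm θ S (v.erase 1) ≤ tnorm θ S (v + y₀) ∧
      1 + θ * tnorm θ S (v.erase 1) ≤ tnorm θ S (v - y₀) := by
  set w := v.erase 1 with hw_def
  set E₀ := w.support with hE₀_def
  set N : ℕ := v.support.sup fun a => (a : ℕ) with hN
  set k : ℕ := max 2 ⌈θ⁻¹⌉₊ with hk
  have hk2 : 2 ≤ k := le_max_left _ _
  have hk0 : 0 < k := by omega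
  have hkR : (0 : ℝ) < k := by exact_mod_cast hk0
  have hθk : 1 ≤ θ * k := by
    have h1 : θ⁻¹ ≤ (⌈θ⁻¹⌉₊ : ℝ) := Nat.le_ceil _
    have h2 : ((⌈θ⁻¹⌉₊ : ℕ) : ℝ) ≤ (k : ℝ) := by
      exact_mod_cast le_max_right 2 ⌈θ⁻¹⌉₊
    rw [← mul_inv_cancel₀ hθ0.ne']
    exact mul_le_mul_of_nonneg_left (h1.trans h2) hθ0.le
  have hθk0 : (0 : ℝ) < θ * k := mul_pos hθ0 hkR
  set f : Fin k → ℕ+ := fun i => ⟨k + N + (i : ℕ) + 1, by omega⟩ with hf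
  have hfmono : ∀ i j : Fin k, i < j → f i < f j := by
    intro i j hij
    rw [← PNat.coe_lt_coe]; show k + N + (i : ℕ) + 1 < k + N + (j : ℕ) + 1
    have := Fin.lt_def.mp hij
    omega
  have hfinj : Function.Injective f := by
    intro i j hij
    rw [hf] at hij
    have : k + N + (i : ℕ) + 1 = k + N + (j : ℕ) + 1 :=
      congrArg (fun p : ℕ+ => (p : ℕ)) hij
    exact Fin.ext (by omega)
  have hfcoe : ∀ i : Fin k, (f i : ℕ) = k + N + (i : ℕ) + 1 := fun i => rfl
  have hsupp_le : ∀ a ∈ v.support, (a : ℕ) ≤ N := fun a ha => Finset.le_sup ha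
  have hfv : ∀ i, v (f i) = 0 := by
    intro i
    by_contra h
    have := hsupp_le (f i) (Finsupp.mem_support_iff.mpr h)
    rw [hfcoe] at this; omega
  set F : Finset ℕ+ := Finset.univ.image f with hF
  have hFmem : ∀ a, a ∈ F ↔ ∃ i, f i = a := by
    intro a; rw [hF]; simp [Finset.mem_image]
  have hFcard : F.card = k := by
    rw [hF, Finset.card_image_of_injective _ hfinj, Finset.card_univ, Fintype.card_fin]
  have hF1 : F ∈ Schreier 1 := by
    intro a ha
    rcases (hFmem a).mp ha with ⟨i, rfl⟩
    rw [hFcard, hfcoe]; omega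
  have hFne : F.Nonempty := ⟨f ⟨0, hk0⟩, (hFmem _).mpr ⟨_, rfl⟩⟩
  have hFS : F ∈ S := hSone F hF1 hFne
  set c : ℝ := (θ * k)⁻¹ with hc
  have hc0 : 0 < c := inv_pos.mpr hθk0
  have hc1 : c ≤ 1 := inv_le_one_of_one_le₀ hθk
  have hkc : (k : ℝ) * c = θ⁻¹ := by
    rw [hc]; field_simp
  set y₀ : ℕ+ →₀ ℝ := Finsupp.indicator F (fun _ _ => c) with hy₀
  have hy₀app : ∀ a, y₀ a = if a ∈ F then c else 0 := by
    intro a; rw [hy₀, Finsupp.indicator_apply]; simp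
  have hy₀f : ∀ i, y₀ (f i) = c := by
    intro i; rw [hy₀app, if_pos ((hFmem _).mpr ⟨i, rfl⟩)]
  have hNF : ∀ a : ℕ+, (a : ℕ) ≤ N → a ∉ F := by
    intro a ha hmem
    rcases (hFmem a).mp hmem with ⟨i, rfl⟩
    rw [hfcoe] at ha; omega
  -- admissible family of singletons, for the norm of y₀
  have hadmF : TsAdmissible S (fun i : Fin k => ({f i} : Finset ℕ+)) := by
    refine ⟨fun i => Finset.singleton_nonempty _, ?_, f, fun i => ?_, ?_⟩
    · intro i j hij a ha b hb
      rw [Finset.mem_singleton] at ha hb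
      subst ha; subst hb; exact hfmono i j hij
    · constructor
      · simp
      · intro b hb
        simp only [Finset.coe_singleton, Set.mem_singleton_iff] at hb
        exact hb.ge
    · have himg : Finset.univ.image f = F := rfl
      rw [himg]; exact hFS
  have habs_proj : ∀ (z : ℕ+ →₀ ℝ) (m : ℕ) (i : Fin k),
      |z (f i)| ≤ tnormAux θ S m (tsProj ({f i} : Finset ℕ+) z) := by
    intro z m i
    have h0 : |z (f i)| ≤ tnormAux θ S 0 (tsProj ({f i} : Finset ℕ+) z) := by
      have heq : (tsProj ({f i} : Finset ℕ+) z) (f i) = z (f i) := by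
        rw [tsProj_apply, if_pos (Finset.mem_singleton_self _)]
      rw [← heq]
      exact abs_le_tnormAux_zero θ S _ (f i)
    exact h0.trans (tnormAux_mono _ (Nat.zero_le m))
  -- ‖y₀‖ = 1
  have hy₀norm : tnorm θ S y₀ = 1 := by
    refine le_antisymm ?_ ?_
    · refine tnorm_le y₀ fun m => (tnormAux_le_max_sup_l1 hθ0.le hθ1 m y₀).trans ?_
      refine max_le ?_ ?_
      · refine (tnormAux_zero_le θ S y₀ fun a => ?_).trans hc1
        rw [hy₀app]
        split
        · exact le_of_eq (abs_of_pos hc0)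
        · simp [hc0.le]
      · have hsupp : y₀.support = F := by
          ext a
          rw [Finsupp.mem_support_iff, hy₀app]
          by_cases ha : a ∈ F
          · simp only [if_pos ha]
            exact ⟨fun _ => ha, fun _ => hc0.ne'⟩
          · simp only [if_neg ha]
            exact ⟨fun h => absurd rfl h, fun h => absurd h ha⟩
        have hl1 : l1 y₀ = (k : ℝ) * c := by
          rw [l1, hsupp,
            Finset.sum_congr rfl fun a ha => by rw [hy₀app, if_pos ha, abs_of_pos hc0],
            Finset.sum_const, hFcard, nsmul_eq_mul]
        rw [hl1, hkc, mul_inv_cancel₀ hθ0.ne']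
    · have hle := le_tnormAux_succ hθ0.le hθ1 hadmF 0 y₀
      have hsum : (θ⁻¹ : ℝ) ≤ ∑ i : Fin k, tnormAux θ S 0 (tsProj ({f i} : Finset ℕ+) y₀) := by
        rw [← hkc]
        calc (k : ℝ) * c = ∑ _i : Fin k, c := by
              rw [Finset.sum_const, Finset.card_univ, Fintype.card_fin, nsmul_eq_mul]
          _ ≤ _ := by
              refine Finset.sum_le_sum fun i _ => ?_
              have h := habs_proj y₀ 0 i
              rwa [hy₀f, abs_of_pos hc0] at h
      calc (1 : ℝ) = θ * θ⁻¹ := (mul_inv_cancel₀ hθ0.ne').symm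
        _ ≤ θ * ∑ i : Fin k, tnormAux θ S 0 (tsProj ({f i} : Finset ℕ+) y₀) :=
            mul_le_mul_of_nonneg_left hsum hθ0.le
        _ ≤ tnormAux θ S 1 y₀ := hle
        _ ≤ tnorm θ S y₀ := tnormAux_le_tnorm hθ0.le hθ1 1 y₀
  -- facts about E₀
  have hE₀v : E₀ ⊆ v.support := by
    rw [hE₀_def, hw_def, Finsupp.support_erase]
    exact Finset.erase_subset _ _
  have hE₀ne1 : ∀ a ∈ E₀, a ≠ 1 := by
    intro a ha
    rw [hE₀_def, hw_def, Finsupp.support_erase, Finset.mem_erase] at ha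
    exact ha.1
  have hE₀le : ∀ a ∈ E₀, (a : ℕ) ≤ N := fun a ha => hsupp_le a (hE₀v ha)
  set minE := E₀.min' hw with hminE
  have hminE_mem : minE ∈ E₀ := E₀.min'_mem hw
  have h2min : 2 ≤ (minE : ℕ) := by
    have h1 := hE₀ne1 minE hminE_mem
    have hne1 : (minE : ℕ) ≠ 1 := fun h => h1 (PNat.coe_injective (by simpa using h))
    have hpos : 0 < (minE : ℕ) := minE.property
    omega
  have hminlt : ∀ b ∈ F, minE < b := by
    intro b hb
    rcases (hFmem b).mp hb with ⟨i, rfl⟩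
    have := hE₀le minE hminE_mem
    rw [← PNat.coe_lt_coe, hfcoe]
    omega
  -- the combined admissible family
  set G : Fin (k + 1) → Finset ℕ+ := Fin.cons E₀ (fun i => ({f i} : Finset ℕ+)) with hG
  have hG0 : G 0 = E₀ := rfl
  have hGsucc : ∀ i : Fin k, G i.succ = ({f i} : Finset ℕ+) := fun i => by
    rw [hG, Fin.cons_succ]
  have hadmG : TsAdmissible S G := by
    refine ⟨?_, ?_, Fin.cons minE f, ?_, ?_⟩
    · intro i
      refine Fin.cases ?_ ?_ i
      · rw [hG0]; exact hw
      · intro j; rw [hGsucc]; exact Finset.singleton_nonempty _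
    · intro i j hij a ha b hb
      rcases Fin.eq_zero_or_eq_succ j with rfl | ⟨j', rfl⟩
      · exact absurd hij (Fin.not_lt_zero i)
      · rw [hGsucc j', Finset.mem_singleton] at hb
        subst hb
        rcases Fin.eq_zero_or_eq_succ i with rfl | ⟨i', rfl⟩
        · rw [hG0] at ha
          have := hE₀le a ha
          rw [← PNat.coe_lt_coe, hfcoe]
          omega
        · rw [hGsucc i', Finset.mem_singleton] at ha
          subst ha
          exact hfmono i' j' (by rwa [Fin.succ_lt_succ_iff] at hij)
    · intro i
      refine Fin.cases ?_ ?_ i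
      · rw [hG0]
        refine ⟨by rw [Fin.cons_zero]; exact hminE_mem, ?_⟩
        intro b hb
        rw [Fin.cons_zero]
        exact E₀.min'_le b hb
      · intro j
        rw [hGsucc]
        refine ⟨by rw [Fin.cons_succ]; exact Finset.mem_singleton_self _, ?_⟩
        intro b hb
        simp only [Finset.coe_singleton, Set.mem_singleton_iff] at hb
        rw [Fin.cons_succ]
        exact hb.ge
    · have himg : Finset.univ.image (Fin.cons minE f : Fin (k+1) → ℕ+) = insert minE F := by
        ext a
        simp only [Finset.mem_image, Finset.mem_univ, true_and, Finset.mem_insert]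
        constructor
        · rintro ⟨i, rfl⟩
          rcases Fin.eq_zero_or_eq_succ i with rfl | ⟨i', rfl⟩
          · left; exact Fin.cons_zero _ _
          · right; rw [Fin.cons_succ]; exact (hFmem _).mpr ⟨i', rfl⟩
        · rintro (rfl | ha)
          · exact ⟨0, Fin.cons_zero _ _⟩
          · rcases (hFmem a).mp ha with ⟨i, rfl⟩
            exact ⟨i.succ, Fin.cons_succ _ _ _⟩
      rw [himg]
      exact hSins minE F h2min hF1 hFne hminlt
  -- main lower bound
  have main : ∀ z : ℕ+ →₀ ℝ, tsProj E₀ z = w → (∀ i : Fin k, |z (f i)| = c) →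
      1 + θ * tnorm θ S w ≤ tnorm θ S z := by
    intro z hz1 hz2
    have hθθ : θ * θ⁻¹ = 1 := mul_inv_cancel₀ hθ0.ne'
    have hstep : ∀ m, θ * tnormAux θ S m w + 1 ≤ tnorm θ S z := by
      intro m
      have hle := le_tnormAux_succ hθ0.le hθ1 hadmG m z
      rw [Fin.sum_univ_succ] at hle
      have hG0z : tsProj (G 0) z = w := by rw [hG0]; exact hz1
      rw [hG0z] at hle
      have hsum : (θ⁻¹ : ℝ) ≤ ∑ i : Fin k, tnormAux θ S m (tsProj (G i.succ) z) := by
        rw [← hkc]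
        calc (k : ℝ) * c = ∑ _i : Fin k, c := by
              rw [Finset.sum_const, Finset.card_univ, Fintype.card_fin, nsmul_eq_mul]
          _ ≤ _ := by
              refine Finset.sum_le_sum fun i _ => ?_
              rw [hGsucc i, ← hz2 i]
              exact habs_proj z m i
      have hmono : θ * (tnormAux θ S m w + θ⁻¹) ≤
          θ * (tnormAux θ S m w + ∑ i : Fin k, tnormAux θ S m (tsProj (G i.succ) z)) :=
        mul_le_mul_of_nonneg_left (by linarith) hθ0.le
      have h2 := hmono.trans (hle.trans (tnormAux_le_tnorm hθ0.le hθ1 (m+1) z))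
      rw [mul_add, hθθ] at h2
      linarith
    have h3 : tnorm θ S w ≤ (tnorm θ S z - 1) / θ := by
      refine tnorm_le w fun m => ?_
      rw [le_div_iff₀ hθ0]
      have := hstep m
      linarith
    rw [le_div_iff₀ hθ0] at h3
    linarith
  -- verifying the hypotheses for v + y₀ and v - y₀
  have hz1p : tsProj E₀ (v + y₀) = w := by
    ext a
    rw [tsProj_apply]
    by_cases ha : a ∈ E₀
    · rw [if_pos ha, Finsupp.add_apply]
      have hy0 : y₀ a = 0 := by rw [hy₀app, if_neg (hNF a (hE₀le a ha))]
      have hva : v a = w a := by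
        rw [hw_def, Finsupp.erase_apply, if_neg (hE₀ne1 a ha)]
      rw [hy0, hva, add_zero]
    · rw [if_neg ha]
      exact (Finsupp.notMem_support_iff.mp (fun h => ha h)).symm
  have hz1m : tsProj E₀ (v - y₀) = w := by
    ext a
    rw [tsProj_apply]
    by_cases ha : a ∈ E₀
    · rw [if_pos ha, Finsupp.sub_apply]
      have hy0 : y₀ a = 0 := by rw [hy₀app, if_neg (hNF a (hE₀le a ha))]
      have hva : v a = w a := by
        rw [hw_def, Finsupp.erase_apply, if_neg (hE₀ne1 a ha)]
      rw [hy0, hva, sub_zero]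
    · rw [if_neg ha]
      exact (Finsupp.notMem_support_iff.mp (fun h => ha h)).symm
  have hz2p : ∀ i : Fin k, |(v + y₀) (f i)| = c := by
    intro i
    rw [Finsupp.add_apply, hfv, hy₀f, zero_add, abs_of_pos hc0]
  have hz2m : ∀ i : Fin k, |(v - y₀) (f i)| = c := by
    intro i
    rw [Finsupp.sub_apply, hfv, hy₀f, zero_sub, abs_neg, abs_of_pos hc0]
  exact ⟨y₀, hy₀norm, main _ hz1p hz2p, main _ hz1m hz2m⟩

end

section
variable {θ : ℝ} {S : Set (Finset ℕ+)}

lemma tnorm_single_one (hθ0 : 0 < θ) (hθ1 : θ ≤ 1) :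
    tnorm θ S (Finsupp.single 1 (1 : ℝ)) = 1 := by
  have hl1 : l1 (Finsupp.single 1 (1 : ℝ)) = 1 := by
    rw [l1, Finsupp.support_single_ne_zero 1 one_ne_zero]
    simp
  refine le_antisymm (tnorm_le _ fun m => (tnormAux_le_l1 hθ0.le hθ1 m _).trans_eq hl1) ?_
  have h := abs_le_tnorm (S := S) hθ0.le hθ1 (Finsupp.single 1 (1 : ℝ)) 1
  simpa using h

end


/-- `X`, together with the sequence `e` of unit vectors, is (a realization of) the
Tsirelson space `T[θ, S_n]`: a Banach space containing `c₀₀` isometrically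
(w.r.t. the Tsirelson norm) as a dense subspace, in which `(e i)` is a
(1-unconditional) basis, i.e. every `x` has a unique expansion `x = ∑ᵢ aᵢ eᵢ`. -/
structure IsTsirelsonSpace (θ : ℝ) (n : ℕ) (X : Type*) [NormedAddCommGroup X]
    [NormedSpace ℝ X] (e : ℕ+ → X) : Prop where
  complete : CompleteSpace X
  norm_embed : ∀ a : ℕ+ →₀ ℝ, ‖a.sum fun i c => c • e i‖ = tnorm θ (Schreier n) a
  dense_embed : DenseRange fun a : ℕ+ →₀ ℝ => a.sum fun i c => c • e i
  expansion : ∀ x : X, ∃! a : ℕ+ → ℝ, HasSum (fun i => a i • e i) x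

set_option maxHeartbeats 2000000 in
/-- For `n ≥ 2` and `u` in the unit sphere of `T[θ, S_n]`:
`min(‖u + y‖, ‖u − y‖) ≤ 1` for all `y` in the unit sphere iff `u = ± e₁`. -/
theorem tsirelson_min_norm_le_one_char_Sn
    (θ : ℝ) (hθ0 : 0 < θ) (hθ : θ ≤ 1 / 2) (n : ℕ) (hn : 2 ≤ n)
    (X : Type*) [NormedAddCommGroup X] [NormedSpace ℝ X] (e : ℕ+ → X)
    (hX : IsTsirelsonSpace θ n X e)
    (u : X) (hu : ‖u‖ = 1) :
    (∀ y : X, ‖y‖ = 1 → min ‖u + y‖ ‖u - y‖ ≤ 1) ↔ (u = e 1 ∨ u = -e 1) := by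
  obtain ⟨n', rfl⟩ : ∃ n', n = n' + 2 := ⟨n - 2, by omega⟩
  set S : Set (Finset ℕ+) := Schreier (n' + 2) with hS
  have hθ1 : θ ≤ 1 := hθ.trans (by norm_num)
  have hS1 : ∀ G ∈ S, (1 : ℕ+) ∈ G → G = {1} := fun G hG h =>
    schreier_one_mem (n' + 1) G hG h
  have hSsing : ∀ a : ℕ+, ({a} : Finset ℕ+) ∈ S := fun a => schreier_singleton _ a
  have hSone : ∀ F : Finset ℕ+, F ∈ Schreier 1 → F.Nonempty → F ∈ S :=
    fun F h hne => schreier_of_one F h hne (n' + 1)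
  have hSins : ∀ (a : ℕ+) (F : Finset ℕ+), 2 ≤ (a : ℕ) → F ∈ Schreier 1 → F.Nonempty →
      (∀ b ∈ F, a < b) → insert a F ∈ S :=
    fun a F ha hF hne hlt => schreier_insert n' a ha F (schreier_of_one F hF hne n') hne hlt
  set Φ : (ℕ+ →₀ ℝ) →ₗ[ℝ] X :=
    Finsupp.lsum ℝ (fun i => LinearMap.toSpanSingleton ℝ X (e i)) with hΦdef
  have hΦ : ∀ a : ℕ+ →₀ ℝ, Φ a = a.sum fun i c => c • e i := fun a => by
    rw [hΦdef, Finsupp.lsum_apply]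
    exact Finsupp.sum_congr fun i _ => rfl
  have hΦnorm : ∀ a : ℕ+ →₀ ℝ, ‖Φ a‖ = tnorm θ S a := fun a => by
    rw [hΦ a]
    exact hX.norm_embed a
  have hdense : DenseRange fun a : ℕ+ →₀ ℝ => Φ a := by
    have h := hX.dense_embed
    have heq : (fun a : ℕ+ →₀ ℝ => a.sum fun i c => c • e i) = fun a => Φ a :=
      funext fun a => (hΦ a).symm
    rwa [heq] at h
  have he1 : Φ (Finsupp.single 1 (1 : ℝ)) = e 1 := by
    rw [hΦ, Finsupp.sum_single_index (by rw [zero_smul]), one_smul]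
  have hnorme1 : ‖e 1‖ = 1 := by
    rw [← he1, hΦnorm, tnorm_single_one hθ0 hθ1]
  -- the key upper bound for u = e 1
  have hkey : ∀ y : X, ‖y‖ = 1 → min ‖e 1 + y‖ ‖e 1 - y‖ ≤ 1 := by
    intro y hy
    refine le_of_forall_pos_le_add fun ε hε => ?_
    obtain ⟨v, hv⟩ := Metric.denseRange_iff.mp hdense y (ε / 2) (by linarith)
    have hvy : ‖y - Φ v‖ < ε / 2 := by rwa [← dist_eq_norm]
    have hvn : tnorm θ S v ≤ 1 + ε / 2 := by
      rw [← hΦnorm]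
      calc ‖Φ v‖ ≤ ‖y‖ + ‖Φ v - y‖ := by
            have h := norm_add_le y (Φ v - y)
            simpa using h
        _ ≤ 1 + ε / 2 := by
            rw [hy, ← norm_neg (Φ v - y)]
            simp only [neg_sub]
            linarith
    have hv1 := (abs_le.mp ((abs_le_tnorm hθ0.le hθ1 v 1).trans hvn))
    have herase_le : tnorm θ S (v.erase 1) ≤ 1 + ε / 2 :=
      (tnorm_erase_le hθ0.le hθ1 hS1 hSsing v).trans hvn
    by_cases hsign : 0 ≤ v 1
    · -- use ‖e 1 - y‖
      refine (min_le_right _ _).trans ?_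
      have heq : e 1 - y = Φ (Finsupp.single 1 (1 : ℝ) - v) - (y - Φ v) := by
        rw [map_sub, he1]; abel
      have hbound : tnorm θ S (Finsupp.single 1 (1 : ℝ) - v) ≤ 1 + ε / 2 := by
        refine (tnorm_le_erase hθ0.le hθ1 hS1 _).trans (max_le ?_ ?_)
        · have hval : ((Finsupp.single 1 (1 : ℝ) - v : ℕ+ →₀ ℝ)) 1 = 1 - v 1 := by
            rw [Finsupp.sub_apply, Finsupp.single_eq_same]
          rw [hval]
          rw [abs_le]
          constructor <;> [linarith [hv1.2]; linarith [hv1.1]]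
        · have herase : (Finsupp.single 1 (1 : ℝ) - v).erase 1 = -(v.erase 1) := by
            ext a
            by_cases h : a = 1
            · subst h; simp [Finsupp.erase_apply]
            · simp [Finsupp.erase_apply, h, Finsupp.single_apply, Ne.symm h]
          rw [herase, tnorm_neg]
          exact herase_le
      calc ‖e 1 - y‖ ≤ ‖Φ (Finsupp.single 1 (1 : ℝ) - v)‖ + ‖y - Φ v‖ := by
            rw [heq]; exact norm_sub_le _ _
        _ ≤ (1 + ε / 2) + ε / 2 := by
            rw [hΦnorm]; exact add_le_add hbound hvy.le
        _ = 1 + ε := by ring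
    · -- use ‖e 1 + y‖
      refine (min_le_left _ _).trans ?_
      push_neg at hsign
      have heq : e 1 + y = Φ (Finsupp.single 1 (1 : ℝ) + v) + (y - Φ v) := by
        rw [map_add, he1]; abel
      have hbound : tnorm θ S (Finsupp.single 1 (1 : ℝ) + v) ≤ 1 + ε / 2 := by
        refine (tnorm_le_erase hθ0.le hθ1 hS1 _).trans (max_le ?_ ?_)
        · have hval : ((Finsupp.single 1 (1 : ℝ) + v : ℕ+ →₀ ℝ)) 1 = 1 + v 1 := by
            rw [Finsupp.add_apply, Finsupp.single_eq_same]
          rw [hval, abs_le]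
          constructor <;> [linarith [hv1.1]; linarith [hv1.2]]
        · have herase : (Finsupp.single 1 (1 : ℝ) + v).erase 1 = v.erase 1 := by
            ext a
            by_cases h : a = 1
            · subst h; simp [Finsupp.erase_apply]
            · simp [Finsupp.erase_apply, h, Finsupp.single_apply, Ne.symm h]
          rw [herase]
          exact herase_le
      calc ‖e 1 + y‖ ≤ ‖Φ (Finsupp.single 1 (1 : ℝ) + v)‖ + ‖y - Φ v‖ := by
            rw [heq]; exact norm_add_le _ _
        _ ≤ (1 + ε / 2) + ε / 2 := by
            rw [hΦnorm]; exact add_le_add hbound hvy.le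
        _ = 1 + ε := by ring
  constructor
  · -- forward direction
    intro hmin
    by_contra hne
    push_neg at hne
    obtain ⟨hne1, hne2⟩ := hne
    set sp := Submodule.span ℝ ({e 1} : Set X) with hsp
    have hu_notin : u ∉ (sp : Set X) := by
      intro hmem
      obtain ⟨cc, hc⟩ := Submodule.mem_span_singleton.mp hmem
      have hcc : |cc| = 1 := by
        have : ‖u‖ = |cc| * ‖e 1‖ := by rw [← hc, norm_smul, Real.norm_eq_abs]
        rw [hnorme1, mul_one] at this
        rw [← this, hu]
      rcases (abs_eq (by norm_num : (0:ℝ) ≤ 1)).mp hcc with rfl | rfl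
      · rw [one_smul] at hc; exact hne1 hc.symm
      · rw [neg_smul, one_smul] at hc; exact hne2 hc.symm
    haveI : FiniteDimensional ℝ sp := by
      rw [hsp]
      exact FiniteDimensional.span_of_finite ℝ (Set.finite_singleton (e 1))
    have hclosed : IsClosed (sp : Set X) := Submodule.closed_of_finiteDimensional sp
    have hsp_ne : (sp : Set X).Nonempty := ⟨0, sp.zero_mem⟩
    set δ := Metric.infDist u (sp : Set X) with hδ
    have hδpos : 0 < δ := by
      rcases lt_or_eq_of_le (Metric.infDist_nonneg (s := (sp : Set X)) (x := u)) with h | h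
      · exact h
      · exact absurd ((hclosed.mem_iff_infDist_zero hsp_ne).mpr h.symm) hu_notin
    have hε : 0 < θ * δ / 4 := by positivity
    obtain ⟨v, hv⟩ := Metric.denseRange_iff.mp hdense u (θ * δ / 4) hε
    have hvu : ‖u - Φ v‖ < θ * δ / 4 := by rwa [← dist_eq_norm]
    have hwlow : δ - θ * δ / 4 ≤ tnorm θ S (v.erase 1) := by
      have h1 : δ ≤ Metric.infDist (Φ v) (sp : Set X) + dist u (Φ v) :=
        Metric.infDist_le_infDist_add_dist
      have hmem : (v 1) • e 1 ∈ (sp : Set X) := Submodule.mem_span_singleton.mpr ⟨v 1, rfl⟩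
      have h2 : Metric.infDist (Φ v) (sp : Set X) ≤ ‖Φ v - (v 1) • e 1‖ := by
        rw [← dist_eq_norm]
        exact Metric.infDist_le_dist_of_mem hmem
      have h3 : Φ (v.erase 1) = Φ v - (v 1) • e 1 := by
        have h4 : Finsupp.single 1 (v 1) + v.erase 1 = v := Finsupp.single_add_erase 1 v
        have h5 : Φ (Finsupp.single 1 (v 1)) = (v 1) • e 1 := by
          rw [hΦ, Finsupp.sum_single_index (by rw [zero_smul])]
        have h6 := congrArg Φ h4
        rw [map_add, h5] at h6
        exact eq_sub_of_add_eq' h6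
      have h7 : tnorm θ S (v.erase 1) = ‖Φ v - (v 1) • e 1‖ := by
        rw [← h3, hΦnorm]
      rw [h7]
      have := hv.le
      rw [dist_eq_norm] at this
      linarith
    have hδε : 0 < δ - θ * δ / 4 := by nlinarith
    have hwne : (v.erase 1).support.Nonempty := by
      rw [Finsupp.support_nonempty_iff]
      intro h0
      rw [h0, tnorm_zero hθ0.le hθ1] at hwlow
      linarith
    obtain ⟨y₀, hy₀norm, hplus, hminus⟩ :=
      tsirelson_construction hθ0 hθ1 hSone hSins v hwne
    set y := Φ y₀ with hy
    have hynorm : ‖y‖ = 1 := by rw [hy, hΦnorm, hy₀norm]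
    have hlow : ∀ z : ℕ+ →₀ ℝ, 1 + θ * tnorm θ S (v.erase 1) ≤ tnorm θ S z →
        ∀ xx : X, xx = Φ z + (u - Φ v) → 1 < ‖xx‖ := by
      intro z hz xx hxx
      have h1 : ‖Φ z‖ ≤ ‖xx‖ + ‖u - Φ v‖ := by
        have : Φ z = xx - (u - Φ v) := by rw [hxx]; abel
        rw [this]
        exact norm_sub_le _ _
      rw [hΦnorm] at h1
      have h2 : 1 + θ * (δ - θ * δ / 4) ≤ tnorm θ S z := by
        refine le_trans ?_ hz
        have := mul_le_mul_of_nonneg_left hwlow hθ0.le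
        linarith
      nlinarith [hvu, hδpos, hθ0, hθ]
    have hplus' : 1 < ‖u + y‖ := by
      refine hlow (v + y₀) hplus (u + y) ?_
      rw [map_add]; abel
    have hminus' : 1 < ‖u - y‖ := by
      refine hlow (v - y₀) hminus (u - y) ?_
      rw [map_sub]; abel
    have := hmin y hynorm
    have : (1 : ℝ) < min ‖u + y‖ ‖u - y‖ := lt_min hplus' hminus'
    linarith [hmin y hynorm]
  · -- backward direction
    rintro (rfl | rfl)
    · exact hkey
    · intro y hy
      have h1 : -e 1 + y = -(e 1 - y) := by abel
      have h2 : -e 1 - y = -(e 1 + y) := by abel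
      rw [h1, h2, norm_neg, norm_neg, min_comm]
      exact hkey y hy
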